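/- For 0 ≤ a < 1 and 0 ≤ λ with λ ≤ a, define Δ(a,λ) := I(a, −a+λ+1, λ) − I(a, a+λ−1, λ), where I(a,b,λ) is the mutual information of the distribution p(a,b,λ). Then Δ(a,0) = 0 and ∂Δ/∂λ = (1/2)·log((1−λ²)/((2−a)²−λ²)) ≤ 0; consequently Δ(a,λ) ≤ 0 for all λ in [0,a], i.e., the maximum of I over b on the boundary of the domain is attained at b = λ + a − 1. -/

import Mathlib

noncomputable section

def p00 (a b lam : ℝ) : ℝ := (1 + a + b + lam) / 4
def p01 (a b lam : ℝ) : ℝ := (1 + a - b - lam) / 4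
def p10 (a b lam : ℝ) : ℝ := (1 - a + b - lam) / 4
def p11 (a b lam : ℝ) : ℝ := (1 - a - b + lam) / 4

def pX0 (a : ℝ) : ℝ := (1 + a) / 2
def pX1 (a : ℝ) : ℝ := (1 - a) / 2
def pY0 (b : ℝ) : ℝ := (1 + b) / 2
def pY1 (b : ℝ) : ℝ := (1 - b) / 2

/-- Mutual information of the binary joint distribution `p(a,b,λ)` (natural log). -/
def MI (a b lam : ℝ) : ℝ :=
    p00 a b lam * Real.log (p00 a b lam / (pX0 a * pY0 b))
  + p01 a b lam * Real.log (p01 a b lam / (pX0 a * pY1 b))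
  + p10 a b lam * Real.log (p10 a b lam / (pX1 a * pY0 b))
  + p11 a b lam * Real.log (p11 a b lam / (pX1 a * pY1 b))

/-- `Δ(a,λ) = I(a, −a+λ+1, λ) − I(a, a+λ−1, λ)` (case `λ ≤ a`). -/
def Delta (a lam : ℝ) : ℝ := MI a (-a + lam + 1) lam - MI a (a + lam - 1) lam

/-- Closed form for `Δ`. -/
def Gfun (a lam : ℝ) : ℝ :=
    (1 + lam) / 2 * Real.log ((1 + lam) / 2)
  - (1 - lam) / 2 * Real.log ((1 - lam) / 2)
  - (2 - a + lam) / 2 * Real.log ((2 - a + lam) / 2)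
  + (2 - a - lam) / 2 * Real.log ((2 - a - lam) / 2)

lemma term_eq (x y z : ℝ) (hy : y ≠ 0) (hz : z ≠ 0) :
    x * Real.log (x / (y * z)) = x * Real.log x - x * Real.log y - x * Real.log z := by
  rcases eq_or_ne x 0 with h | h
  · simp [h]
  · rw [Real.log_div h (mul_ne_zero hy hz), Real.log_mul hy hz]; ring

lemma term_cancel (x y : ℝ) (hy : y ≠ 0) :
    x * Real.log (x / (y * x)) = -(x * Real.log y) := by
  rcases eq_or_ne x 0 with h | h
  · simp [h]
  · rw [show x / (y * x) = y⁻¹ by field_simp, Real.log_inv]; ring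

lemma delta_closed (a : ℝ) (ha : 0 ≤ a) (ha' : a < 1) (lam : ℝ)
    (h1 : -1 < lam) (h2 : lam < 1) : Delta a lam = Gfun a lam := by
  have hX0 : (1 + a) / 2 ≠ 0 := by positivity
  have hX1 : (1 - a) / 2 ≠ 0 := by
    have : (0:ℝ) < (1 - a) / 2 := by linarith
    exact ne_of_gt this
  have hY0 : (2 - a + lam) / 2 ≠ 0 := by
    have : (0:ℝ) < (2 - a + lam) / 2 := by linarith
    exact ne_of_gt this
  have hY1 : (2 - a - lam) / 2 ≠ 0 := by
    have : (0:ℝ) < (2 - a - lam) / 2 := by linarith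
    exact ne_of_gt this
  have e1 : MI a (-a + lam + 1) lam
      = (1 + lam) / 2 * Real.log ((1 + lam) / 2 / ((1 + a) / 2 * ((2 - a + lam) / 2)))
      + (a - lam) / 2 * Real.log ((a - lam) / 2 / ((1 + a) / 2 * ((a - lam) / 2)))
      + (1 - a) / 2 * Real.log ((1 - a) / 2 / ((1 - a) / 2 * ((2 - a + lam) / 2)))
      + 0 * Real.log (0 / ((1 - a) / 2 * ((a - lam) / 2))) := by
    unfold MI p00 p01 p10 p11 pX0 pX1 pY0 pY1
    norm_num
    ring_nf
  have e2 : MI a (a + lam - 1) lam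
      = (a + lam) / 2 * Real.log ((a + lam) / 2 / ((1 + a) / 2 * ((a + lam) / 2)))
      + (1 - lam) / 2 * Real.log ((1 - lam) / 2 / ((1 + a) / 2 * ((2 - a - lam) / 2)))
      + 0 * Real.log (0 / ((1 - a) / 2 * ((a + lam) / 2)))
      + (1 - a) / 2 * Real.log ((1 - a) / 2 / ((1 - a) / 2 * ((2 - a - lam) / 2))) := by
    unfold MI p00 p01 p10 p11 pX0 pX1 pY0 pY1
    norm_num
    ring_nf
  unfold Delta Gfun
  rw [e1, e2,
    term_eq ((1 + lam) / 2) ((1 + a) / 2) ((2 - a + lam) / 2) hX0 hY0,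
    term_cancel ((a - lam) / 2) ((1 + a) / 2) hX0,
    term_eq ((1 - a) / 2) ((1 - a) / 2) ((2 - a + lam) / 2) hX1 hY0,
    term_cancel ((a + lam) / 2) ((1 + a) / 2) hX0,
    term_eq ((1 - lam) / 2) ((1 + a) / 2) ((2 - a - lam) / 2) hX0 hY1,
    term_eq ((1 - a) / 2) ((1 - a) / 2) ((2 - a - lam) / 2) hX1 hY1]
  ring

lemma hasDerivAt_xlogx {x : ℝ} (hx : x ≠ 0) :
    HasDerivAt (fun y : ℝ => y * Real.log y) (Real.log x + 1) x := by
  have h : HasDerivAt (fun y : ℝ => y * Real.log y) (1 * Real.log x + id x * x⁻¹) x :=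
    (hasDerivAt_id x).mul (Real.hasDerivAt_log hx)
  convert h using 1
  simp [hx]

lemma gfun_hasDeriv (a : ℝ) (ha : 0 ≤ a) (ha' : a < 1) (lam : ℝ)
    (h1 : -1 < lam) (h2 : lam < 1) (h3 : lam < 2 - a) (h4 : -(2 - a) < lam) :
    HasDerivAt (fun t => Gfun a t)
      ((1/2) * (Real.log ((1 + lam) / 2) + Real.log ((1 - lam) / 2)
        - Real.log ((2 - a + lam) / 2) - Real.log ((2 - a - lam) / 2))) lam := by
  have hp1 : (1 + lam) / 2 ≠ 0 := ne_of_gt (by linarith)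
  have hp2 : (1 - lam) / 2 ≠ 0 := ne_of_gt (by linarith)
  have hp3 : (2 - a + lam) / 2 ≠ 0 := ne_of_gt (by linarith)
  have hp4 : (2 - a - lam) / 2 ≠ 0 := ne_of_gt (by linarith)
  have hu1 : HasDerivAt (fun t : ℝ => (1 + t) / 2) (1 / 2) lam := by
    simpa using ((hasDerivAt_id lam).const_add 1).div_const 2
  have hu2 : HasDerivAt (fun t : ℝ => (1 - t) / 2) (-1 / 2) lam := by
    simpa using ((hasDerivAt_id lam).const_sub 1).div_const 2
  have hu3 : HasDerivAt (fun t : ℝ => (2 - a + t) / 2) (1 / 2) lam := by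
    simpa using ((hasDerivAt_id lam).const_add (2 - a)).div_const 2
  have hu4 : HasDerivAt (fun t : ℝ => (2 - a - t) / 2) (-1 / 2) lam := by
    simpa using ((hasDerivAt_id lam).const_sub (2 - a)).div_const 2
  have A1 : HasDerivAt (fun t : ℝ => (1 + t) / 2 * Real.log ((1 + t) / 2))
      ((Real.log ((1 + lam) / 2) + 1) * (1 / 2)) lam :=
    by have := (hasDerivAt_xlogx hp1).comp lam hu1; exact this
  have A2 : HasDerivAt (fun t : ℝ => (1 - t) / 2 * Real.log ((1 - t) / 2))
      ((Real.log ((1 - lam) / 2) + 1) * (-1 / 2)) lam :=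
    by have := (hasDerivAt_xlogx hp2).comp lam hu2; exact this
  have A3 : HasDerivAt (fun t : ℝ => (2 - a + t) / 2 * Real.log ((2 - a + t) / 2))
      ((Real.log ((2 - a + lam) / 2) + 1) * (1 / 2)) lam :=
    by have := (hasDerivAt_xlogx hp3).comp lam hu3; exact this
  have A4 : HasDerivAt (fun t : ℝ => (2 - a - t) / 2 * Real.log ((2 - a - t) / 2))
      ((Real.log ((2 - a - lam) / 2) + 1) * (-1 / 2)) lam :=
    by have := (hasDerivAt_xlogx hp4).comp lam hu4; exact this
  have : HasDerivAt (fun t => Gfun a t)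
      ((Real.log ((1 + lam) / 2) + 1) * (1 / 2) - (Real.log ((1 - lam) / 2) + 1) * (-1 / 2)
        - (Real.log ((2 - a + lam) / 2) + 1) * (1 / 2)
        + (Real.log ((2 - a - lam) / 2) + 1) * (-1 / 2)) lam :=
    ((A1.sub A2).sub A3).add A4
  convert this using 1
  ring

lemma deriv_formula (a : ℝ) (ha : 0 ≤ a) (ha' : a < 1) (lam : ℝ)
    (hl : 0 ≤ lam) (hla : lam ≤ a) :
    deriv (fun t => Delta a t) lam
      = (1 / 2) * Real.log ((1 - lam ^ 2) / ((2 - a) ^ 2 - lam ^ 2)) := by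
  have h2 : lam < 1 := lt_of_le_of_lt hla ha'
  have h1 : -1 < lam := by linarith
  have hev : (fun t => Delta a t) =ᶠ[nhds lam] (fun t => Gfun a t) := by
    filter_upwards [Ioo_mem_nhds h1 h2] with x hx
    exact delta_closed a ha ha' x hx.1 hx.2
  have hG := gfun_hasDeriv a ha ha' lam h1 h2 (by linarith) (by linarith)
  rw [hev.deriv_eq, hG.deriv]
  have e1 : Real.log ((1 + lam) / 2) = Real.log (1 + lam) - Real.log 2 :=
    Real.log_div (by linarith) two_ne_zero
  have e2 : Real.log ((1 - lam) / 2) = Real.log (1 - lam) - Real.log 2 :=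
    Real.log_div (by linarith) two_ne_zero
  have e3 : Real.log ((2 - a + lam) / 2) = Real.log (2 - a + lam) - Real.log 2 :=
    Real.log_div (by linarith) two_ne_zero
  have e4 : Real.log ((2 - a - lam) / 2) = Real.log (2 - a - lam) - Real.log 2 :=
    Real.log_div (by linarith) two_ne_zero
  have hnum : (1 : ℝ) - lam ^ 2 = (1 + lam) * (1 - lam) := by ring
  have hden : (2 - a) ^ 2 - lam ^ 2 = (2 - a + lam) * (2 - a - lam) := by ring
  rw [e1, e2, e3, e4, hnum, hden,
    Real.log_div (mul_ne_zero (by intro h; nlinarith) (by intro h; nlinarith))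
      (mul_ne_zero (by intro h; nlinarith) (by intro h; nlinarith)),
    Real.log_mul (by intro h; nlinarith) (by intro h; nlinarith),
    Real.log_mul (by intro h; nlinarith) (by intro h; nlinarith)]
  ring

theorem boundary_max_b_case_lam_le_a (a : ℝ) (ha : 0 ≤ a) (ha' : a < 1) :
    Delta a 0 = 0 ∧
    (∀ lam : ℝ, 0 ≤ lam → lam ≤ a →
      deriv (fun t => Delta a t) lam
        = (1 / 2) * Real.log ((1 - lam ^ 2) / ((2 - a) ^ 2 - lam ^ 2)) ∧
      deriv (fun t => Delta a t) lam ≤ 0) ∧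
    (∀ lam : ℝ, 0 ≤ lam → lam ≤ a → Delta a lam ≤ 0) := by
  have hzero : Delta a 0 = 0 := by
    rw [delta_closed a ha ha' 0 (by norm_num) (by norm_num)]
    unfold Gfun
    ring
  have hnonpos : ∀ lam : ℝ, 0 ≤ lam → lam ≤ a →
      (1 / 2) * Real.log ((1 - lam ^ 2) / ((2 - a) ^ 2 - lam ^ 2)) ≤ 0 := by
    intro lam hl hla
    have h2 : lam < 1 := lt_of_le_of_lt hla ha'
    have hdpos : (0:ℝ) < (2 - a) ^ 2 - lam ^ 2 := by nlinarith
    have hr1 : (1 - lam ^ 2) / ((2 - a) ^ 2 - lam ^ 2) ≤ 1 := by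
      rw [div_le_one hdpos]; nlinarith
    have hr0 : (0:ℝ) ≤ (1 - lam ^ 2) / ((2 - a) ^ 2 - lam ^ 2) := by
      apply div_nonneg _ hdpos.le; nlinarith
    have := Real.log_nonpos hr0 hr1
    linarith
  refine ⟨hzero, fun lam hl hla => ⟨deriv_formula a ha ha' lam hl hla, ?_⟩, ?_⟩
  · rw [deriv_formula a ha ha' lam hl hla]; exact hnonpos lam hl hla
  · intro lam hl hla
    have h2 : lam < 1 := lt_of_le_of_lt hla ha'
    have hmono : AntitoneOn (fun t => Gfun a t) (Set.Icc 0 a) := by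
      apply antitoneOn_of_deriv_nonpos (convex_Icc 0 a)
      · intro x hx
        have hx1 : (0:ℝ) ≤ x := hx.1
        have hx2 : x ≤ a := hx.2
        have := gfun_hasDeriv a ha ha' x (by linarith) (by linarith [lt_of_le_of_lt hx2 ha'])
          (by linarith) (by linarith)
        exact this.continuousAt.continuousWithinAt
      · intro x hx
        rw [interior_Icc] at hx
        have := gfun_hasDeriv a ha ha' x (by linarith [hx.1]) (by linarith [lt_of_lt_of_le hx.2 (le_of_lt ha')])
          (by linarith [hx.1, hx.2]) (by linarith [hx.1])
        exact this.differentiableAt.differentiableWithinAt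
      · intro x hx
        rw [interior_Icc] at hx
        have hx2 : x < 1 := lt_of_lt_of_le hx.2 ha'.le
        have hG := gfun_hasDeriv a ha ha' x (by linarith [hx.1]) hx2
          (by linarith [hx.1]) (by linarith [hx.1])
        have hd := deriv_formula a ha ha' x hx.1.le hx.2.le
        have hev : (fun t => Delta a t) =ᶠ[nhds x] (fun t => Gfun a t) := by
          filter_upwards [Ioo_mem_nhds (show -1 < x by linarith [hx.1]) hx2] with y hy
          exact delta_closed a ha ha' y hy.1 hy.2
        rw [← hev.deriv_eq, hd]
        exact hnonpos x hx.1.le hx.2.le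
    have h0 : Gfun a 0 = 0 := by unfold Gfun; ring
    have := hmono (Set.left_mem_Icc.mpr ha) ⟨hl, hla⟩ hl
    rw [delta_closed a ha ha' lam (by linarith) h2]
    simpa [h0] using this
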